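/- arXiv:2107.12555 — 3 statements merged into one kernel-verified Lean document; each statement's English description precedes it below -/
import Mathlib

section
/- Let p ≥ 2 be an integer and s : ℕ → ℕ a sequence with s 1 ≥ 1 and s_{n+1} ≥ p·s_n for all n ≥ 1. Define d_n = p^{n-1}·s_n − Σ_{j=1}^{n-1} (p^j − p^{j-1})·s_j. Then d_n ≥ 1 for all n ≥ 1, and d_{n+1} ≥ (p² − p + 1)·d_n for all n ≥ 1. -/
theorem lower_break_growth (p : ℕ) (hp : 2 ≤ p) (s : ℕ → ℕ) (hs1 : 1 ≤ s 1)
    (hs : ∀ n, 1 ≤ n → p * s n ≤ s (n + 1)) (d : ℕ → ℤ)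
    (hd : ∀ n, d n = (p : ℤ) ^ (n - 1) * (s n : ℤ) -
      ∑ j ∈ Finset.Ico 1 n, ((p : ℤ) ^ j - (p : ℤ) ^ (j - 1)) * (s j : ℤ)) :
    (∀ n, 1 ≤ n → 1 ≤ d n) ∧
      (∀ n, 1 ≤ n → ((p : ℤ) ^ 2 - (p : ℤ) + 1) * d n ≤ d (n + 1)) := by
  have hpz : (2 : ℤ) ≤ (p : ℤ) := by exact_mod_cast hp
  have hsn : ∀ n, 1 ≤ n → 1 ≤ s n := by
    intro n
    induction n with
    | zero => intro h; omega
    | succ m ih =>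
      intro _
      rcases Nat.eq_zero_or_pos m with hm | hm
      · subst hm; exact hs1
      · have h1 := hs m hm
        have h2 := ih hm
        nlinarith
  have hrec : ∀ n, 1 ≤ n → d (n + 1) = d n + (p : ℤ) ^ n * ((s (n + 1) : ℤ) - (s n : ℤ)) := by
    intro n hn
    rw [hd (n + 1), hd n, Finset.sum_Ico_succ_top hn]
    have h1 : n + 1 - 1 = n := by omega
    rw [h1]
    ring
  have hbd : ∀ n, d n ≤ (p : ℤ) ^ (n - 1) * (s n : ℤ) := by
    intro n
    rw [hd n]
    have h0 : 0 ≤ ∑ j ∈ Finset.Ico 1 n, ((p : ℤ) ^ j - (p : ℤ) ^ (j - 1)) * (s j : ℤ) := by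
      apply Finset.sum_nonneg
      intro j hj
      have hj1 : 1 ≤ j := (Finset.mem_Ico.mp hj).1
      have hle : (p : ℤ) ^ (j - 1) ≤ (p : ℤ) ^ j :=
        pow_le_pow_right₀ (by linarith) (by omega)
      have hs0 : (0 : ℤ) ≤ (s j : ℤ) := Int.ofNat_nonneg _
      nlinarith
    linarith
  have hpos : ∀ n, 1 ≤ n → 1 ≤ d n := by
    intro n
    induction n with
    | zero => intro h; omega
    | succ m ih =>
      intro _
      rcases Nat.eq_zero_or_pos m with hm | hm
      · subst hm
        rw [hd 1]
        simp
        exact_mod_cast hs1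
      · have h1 := ih hm
        have h2 := hrec m hm
        have h3 := hs m hm
        have h4 := hsn m hm
        have hps : (s m : ℤ) ≤ (s (m + 1) : ℤ) := by
          have : s m ≤ p * s m := Nat.le_mul_of_pos_left _ (by omega)
          exact_mod_cast le_trans this h3
        have hp0 : (0 : ℤ) ≤ (p : ℤ) ^ m := by positivity
        nlinarith
  refine ⟨hpos, ?_⟩
  intro n hn
  have h2 := hrec n hn
  have h3 : (p : ℤ) * (s n : ℤ) ≤ (s (n + 1) : ℤ) := by exact_mod_cast hs n hn
  have h4 := hbd n
  have h5 : (p : ℤ) ^ n = (p : ℤ) ^ (n - 1) * p := by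
    rw [← pow_succ]
    congr 1
    omega
  have hq0 : (0 : ℤ) ≤ (p : ℤ) ^ (n - 1) := by positivity
  have hs0 : (0 : ℤ) ≤ (s n : ℤ) := Int.ofNat_nonneg _
  nlinarith [mul_nonneg (mul_nonneg hq0 (by linarith : (0:ℤ) ≤ (p:ℤ))) (by nlinarith : (0:ℤ) ≤ (s (n+1) : ℤ) - (p : ℤ) * (s n : ℤ)),
    mul_nonneg (by nlinarith : (0:ℤ) ≤ (p:ℤ)^2 - (p:ℤ)) (by linarith : (0:ℤ) ≤ (p:ℤ)^(n-1) * (s n : ℤ) - d n)]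
end

section
/- Let p > 1 be a real number and set t = (p+1)/(p−1). Then the series Σ_{i=1}^{∞} i / ((i+t)³ − (i+t)) converges and its sum equals (p−1)/(2(p+1)). -/
theorem beta_weighted_sum (p : ℝ) (hp : 1 < p) (t : ℝ) (ht : t = (p + 1) / (p - 1)) :
    HasSum (fun i : ℕ => ((i : ℝ) + 1) / ((((i : ℝ) + 1) + t) ^ 3 - (((i : ℝ) + 1) + t)))
      ((p - 1) / (2 * (p + 1))) := by
  have hp1 : (0:ℝ) < p - 1 := by linarith
  have ht1 : 1 < t := by
    rw [ht, lt_div_iff₀ hp1]; linarith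
  set g : ℕ → ℝ := fun n => (1 - t) / 2 / ((n : ℝ) + t) + (1 + t) / 2 / ((n : ℝ) + t + 1)
    with hg
  have hpos : ∀ n : ℕ, (0:ℝ) ≤ ((n : ℝ) + 1) / ((((n : ℝ) + 1) + t) ^ 3 - (((n : ℝ) + 1) + t)) := by
    intro n
    have hx : (1:ℝ) < (n : ℝ) + 1 + t := by
      have : (0:ℝ) ≤ (n : ℝ) := Nat.cast_nonneg n
      linarith
    apply div_nonneg (by positivity)
    nlinarith [sq_nonneg ((n:ℝ) + 1 + t)]
  have hterm : ∀ n : ℕ, ((n : ℝ) + 1) / ((((n : ℝ) + 1) + t) ^ 3 - (((n : ℝ) + 1) + t))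
      = g n - g (n + 1) := by
    intro n
    have hn : (0:ℝ) ≤ (n : ℝ) := Nat.cast_nonneg n
    have h1 : ((n:ℝ) + t) ≠ 0 := by nlinarith
    have h2 : ((n:ℝ) + t + 1) ≠ 0 := by nlinarith
    have h3 : ((n:ℝ) + t + 2) ≠ 0 := by nlinarith
    have hx : (1:ℝ) < (n : ℝ) + 1 + t := by linarith
    have h4 : (((n : ℝ) + 1) + t) ^ 3 - (((n : ℝ) + 1) + t) ≠ 0 := by
      have h5 : (0:ℝ) < (((n : ℝ) + 1) + t) ^ 3 - (((n : ℝ) + 1) + t) := by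
        nlinarith [mul_pos (sub_pos.2 hx) (lt_trans one_pos hx), sq_nonneg ((n:ℝ) + 1 + t)]
      exact h5.ne'
    simp only [hg, Nat.cast_add, Nat.cast_one]
    have h6 : ((n:ℝ) + 1 + t) ≠ 0 := by linarith
    rw [show (((n : ℝ) + 1) + t) ^ 3 - (((n : ℝ) + 1) + t)
        = ((n:ℝ) + t) * ((n:ℝ) + 1 + t) * ((n:ℝ) + t + 2) by ring]
    field_simp
    ring
  rw [hasSum_iff_tendsto_nat_of_nonneg hpos]
  have hsum : ∀ N : ℕ, ∑ i ∈ Finset.range N,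
      ((i : ℝ) + 1) / ((((i : ℝ) + 1) + t) ^ 3 - (((i : ℝ) + 1) + t)) = g 0 - g N := by
    intro N
    rw [← Finset.sum_range_sub' g N]
    exact Finset.sum_congr rfl fun i _ => hterm i
  simp only [hsum]
  have hg0 : g 0 = (p - 1) / (2 * (p + 1)) := by
    have hp2 : (0:ℝ) < p + 1 := by linarith
    simp only [hg, Nat.cast_zero, zero_add, ht]
    field_simp
    ring
  have hlim : Filter.Tendsto g Filter.atTop (nhds 0) := by
    have h1 : Filter.Tendsto (fun n : ℕ => ((n : ℝ) + t)) Filter.atTop Filter.atTop :=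
      Filter.tendsto_atTop_add_const_right _ _ tendsto_natCast_atTop_atTop
    have h2 : Filter.Tendsto (fun n : ℕ => ((n : ℝ) + t + 1)) Filter.atTop Filter.atTop :=
      Filter.tendsto_atTop_add_const_right _ _ h1
    have := (Filter.Tendsto.div_atTop (tendsto_const_nhds (x := (1 - t) / 2)) h1).add
      (Filter.Tendsto.div_atTop (tendsto_const_nhds (x := (1 + t) / 2)) h2)
    simpa using this
  rw [hg0] at *
  simpa using Filter.Tendsto.const_sub ((p - 1) / (2 * (p + 1))) hlim
end

section
/- Let d ≥ 1 be an odd integer and for i ≥ 1 set s_i = (d+2)·2^{i-1} − 2 if i is odd and s_i = (d+2)·2^{i-1} − 1 if i is even. Define g_n for n ≥ 1 by 2·g_n − 2 = −2·2^n + Σ_{i=1}^{n} 2^{i-1}·(s_i + 1). Then for all n ≥ 1, g_n = ((d+1)/2)·(2^{2n} − 1)/3 + 2^{n-1}·⌊(2^n − 7)/3⌋ + 1, where the floor is the integer floor of the rational number (2^n−7)/3 (which may be negative). -/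
lemma aux_dvd (k : ℕ) : (3:ℤ) ∣ 4 ^ k - 1 := by
  simpa using sub_dvd_pow_sub_pow (4:ℤ) 1 k

lemma floor_odd (m : ℕ) :
    ((⌊((2:ℚ) ^ (2*m+1) - 7) / 3⌋ : ℤ) : ℚ) = ((2:ℚ) ^ (2*m+1) - 8) / 3 := by
  obtain ⟨k, hk⟩ := aux_dvd m
  have h4 : ((2:ℚ)) ^ (2*m+1) = 2 * 4 ^ m := by
    rw [pow_succ, pow_mul]; ring
  have hkq : (4:ℚ) ^ m - 1 = 3 * (k:ℚ) := by exact_mod_cast congrArg (Int.cast : ℤ → ℚ) hk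
  have h13 : ⌊(1/3 : ℚ)⌋ = 0 := by norm_num
  have : ((2:ℚ) ^ (2*m+1) - 7) / 3 = ((2*k - 2 : ℤ) : ℚ) + (1/3 : ℚ) := by
    rw [h4]; push_cast; linarith
  rw [this, Int.floor_intCast_add, h13, h4]
  push_cast; linarith

lemma floor_even (m : ℕ) :
    ((⌊((2:ℚ) ^ (2*m) - 7) / 3⌋ : ℤ) : ℚ) = ((2:ℚ) ^ (2*m) - 7) / 3 := by
  obtain ⟨k, hk⟩ := aux_dvd m
  have h4 : ((2:ℚ)) ^ (2*m) = 4 ^ m := by rw [pow_mul]; norm_num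
  have hkq : (4:ℚ) ^ m - 1 = 3 * (k:ℚ) := by exact_mod_cast congrArg (Int.cast : ℤ → ℚ) hk
  have : ((2:ℚ) ^ (2*m) - 7) / 3 = ((k - 2 : ℤ) : ℚ) := by
    rw [h4]; push_cast; linarith
  rw [this, Int.floor_intCast]

lemma floor_even' (m : ℕ) :
    ((⌊((2:ℚ) ^ (2*m+2) - 7) / 3⌋ : ℤ) : ℚ) = ((2:ℚ) ^ (2*m+2) - 7) / 3 := by
  have h := floor_even (m+1)
  rwa [show 2*(m+1) = 2*m+2 by ring] at h

lemma floor_odd' (m : ℕ) :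
    ((⌊((2:ℚ) ^ (2*m+3) - 7) / 3⌋ : ℤ) : ℚ) = ((2:ℚ) ^ (2*m+3) - 8) / 3 := by
  have h := floor_odd (m+1)
  rwa [show 2*(m+1)+1 = 2*m+3 by ring] at h

theorem periodic_monodromy_genus (d : ℤ) (hd : 1 ≤ d) (hodd : Odd d)
    (s : ℕ → ℤ)
    (hs : ∀ i, 1 ≤ i → s i = if Odd i then (d + 2) * 2 ^ (i - 1) - 2 else (d + 2) * 2 ^ (i - 1) - 1)
    (g : ℕ → ℚ)
    (hg : ∀ n, 1 ≤ n → 2 * g n - 2 = -2 * 2 ^ n +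
      ∑ i ∈ Finset.Icc 1 n, (2 : ℚ) ^ (i - 1) * ((s i : ℚ) + 1)) :
    ∀ n, 1 ≤ n → g n = (((d : ℚ) + 1) / 2) * ((2 ^ (2 * n) - 1) / 3) +
      2 ^ (n - 1) * ((⌊((2 ^ n - 7 : ℚ)) / 3⌋ : ℤ) : ℚ) + 1 := by
  intro n hn
  induction n, hn using Nat.le_induction with
  | base =>
    have h1 := hg 1 le_rfl
    have hs1 := hs 1 le_rfl
    simp only [Finset.Icc_self, Finset.sum_singleton] at h1
    rw [hs1] at h1
    norm_num at h1 ⊢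
    linarith
  | succ n hn ih =>
    have h1 := hg (n+1) (by omega)
    have h2 := hg n hn
    rw [Finset.sum_Icc_succ_top (by omega : 1 ≤ n + 1)] at h1
    have hsn := hs (n+1) (by omega)
    rcases Nat.even_or_odd n with he | ho
    · -- n even ≥ 2, so n = 2*m+2 ; n+1 odd
      rw [Nat.even_iff] at he
      obtain ⟨m, rfl⟩ : ∃ m, n = 2*m+2 := ⟨n/2 - 1, by omega⟩
      have hodd1 : Odd (2*m+2+1) := ⟨m+1, by ring⟩
      rw [if_pos hodd1] at hsn
      -- normalize nat index expressions
      simp only [show 2*m+2+1 = 2*m+3 from by omega, show 2*m+3-1 = 2*m+2 from by omega,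
        show (2*m+2)-1 = 2*m+1 from by omega, show 2*(2*m+2) = 4*m+4 from by omega,
        show 2*(2*m+3) = 4*m+6 from by omega] at h1 h2 ih hsn ⊢
      rw [floor_even' m] at ih
      rw [floor_odd' m]
      rw [hsn] at h1
      push_cast at h1
      set a : ℚ := (2:ℚ)^m with ha
      have p1 : (2:ℚ)^(2*m+1) = 2*a^2 := by
        rw [ha, show 2*m+1 = m*2+1 from by ring, pow_add, pow_mul]; ring
      have p2 : (2:ℚ)^(2*m+2) = 4*a^2 := by
        rw [ha, show 2*m+2 = m*2+2 from by ring, pow_add, pow_mul]; ring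
      have p3 : (2:ℚ)^(2*m+3) = 8*a^2 := by
        rw [ha, show 2*m+3 = m*2+3 from by ring, pow_add, pow_mul]; ring
      have p4 : (2:ℚ)^(4*m+4) = 16*a^4 := by
        rw [ha, show 4*m+4 = m*4+4 from by ring, pow_add, pow_mul]; ring
      have p5 : (2:ℚ)^(4*m+6) = 64*a^4 := by
        rw [ha, show 4*m+6 = m*4+6 from by ring, pow_add, pow_mul]; ring
      simp only [p1, p2, p3, p4, p5] at h1 h2 ih ⊢
      linarith [h1, h2, ih]
    · -- n odd : n = 2*m+1 ; n+1 even
      obtain ⟨m, rfl⟩ := ho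
      have heven1 : ¬ Odd (2*m+1+1) := by simp [Nat.odd_iff]; omega
      rw [if_neg heven1] at hsn
      simp only [show 2*m+1+1 = 2*m+2 from by omega, show 2*m+2-1 = 2*m+1 from by omega,
        show (2*m+1)-1 = 2*m from by omega, show 2*(2*m+1) = 4*m+2 from by omega,
        show 2*(2*m+2) = 4*m+4 from by omega] at h1 h2 ih hsn ⊢
      rw [floor_odd m] at ih
      rw [floor_even' m]
      rw [hsn] at h1
      push_cast at h1
      set a : ℚ := (2:ℚ)^m with ha
      have p0 : (2:ℚ)^(2*m) = a^2 := by
        rw [ha, show 2*m = m*2 from by ring, pow_mul]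
      have p1 : (2:ℚ)^(2*m+1) = 2*a^2 := by
        rw [ha, show 2*m+1 = m*2+1 from by ring, pow_add, pow_mul]; ring
      have p2 : (2:ℚ)^(2*m+2) = 4*a^2 := by
        rw [ha, show 2*m+2 = m*2+2 from by ring, pow_add, pow_mul]; ring
      have p4 : (2:ℚ)^(4*m+2) = 4*a^4 := by
        rw [ha, show 4*m+2 = m*4+2 from by ring, pow_add, pow_mul]; ring
      have p5 : (2:ℚ)^(4*m+4) = 16*a^4 := by
        rw [ha, show 4*m+4 = m*4+4 from by ring, pow_add, pow_mul]; ring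
      simp only [p0, p1, p2, p4, p5] at h1 h2 ih ⊢
      linarith [h1, h2, ih]
end
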